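/- Let D ⊂ ℂ^d be a bounded strongly ℂ-convex C² domain with defining function ρ, and define d(ζ, w) := |L(ζ, w)|^{1/2} on bD × bD, where L(ζ, w) = ⟨∂ρ(w), w − ζ⟩ / ‖∂ρ(w)‖. Then d is a quasimetric: there exists q ≥ 1 such that (a) d(ζ, w) = 0 iff ζ = w, (b) d(ζ, w) ≤ q·d(w, ζ), and (c) d(ζ, w) ≤ q·(d(ζ, z) + d(z, w)) for all ζ, z, w ∈ bD. -/

import Mathlib

open MeasureTheory Bornology

/-- The complex gradient `∂ρ(w)_j = ½(∂ρ/∂x_j − i ∂ρ/∂y_j)` of a real-valued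
function on `ℂ^d`, expressed via the real Fréchet derivative. -/
noncomputable def cderiv {d : ℕ} (ρ : EuclideanSpace ℂ (Fin d) → ℝ)
    (w : EuclideanSpace ℂ (Fin d)) (j : Fin d) : ℂ :=
  (1 / 2 : ℂ) * ((fderiv ℝ ρ w (EuclideanSpace.single j 1) : ℂ)
    - Complex.I * (fderiv ℝ ρ w (EuclideanSpace.single j Complex.I) : ℂ))

/-- `L(z,w) = ⟨∂ρ(w), w − z⟩ / ‖∂ρ(w)‖`. -/
noncomputable def Lfun {d : ℕ} (ρ : EuclideanSpace ℂ (Fin d) → ℝ)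
    (z w : EuclideanSpace ℂ (Fin d)) : ℂ :=
  (∑ j, cderiv ρ w j * (w j - z j)) /
    ((Real.sqrt (∑ j, Complex.normSq (cderiv ρ w j)) : ℝ) : ℂ)

private lemma cs_aux {d : ℕ} (a b : EuclideanSpace ℂ (Fin d)) :
    ‖∑ j, a j * b j‖ ≤ ‖a‖ * ‖b‖ := by
  set a' : EuclideanSpace ℂ (Fin d) := (WithLp.equiv 2 _).symm (fun j => (starRingEnd ℂ) (a j))
    with ha'
  have h1 : (inner ℂ a' b : ℂ) = ∑ j, a j * b j := by
    simp [PiLp.inner_apply, a', RCLike.inner_apply, WithLp.equiv_symm_apply, PiLp.toLp_apply, mul_comm]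
  have h2 : ‖a'‖ = ‖a‖ := by
    rw [EuclideanSpace.norm_eq, EuclideanSpace.norm_eq]
    congr 1; apply Finset.sum_congr rfl; intro j _
    simp [a', WithLp.equiv_symm_apply, PiLp.toLp_apply]
  calc ‖∑ j, a j * b j‖ = ‖(inner ℂ a' b : ℂ)‖ := by rw [h1]
    _ ≤ ‖a'‖ * ‖b‖ := norm_inner_le_norm _ _
    _ = ‖a‖ * ‖b‖ := by rw [h2]

private lemma abs_add₃_aux (x y z : ℂ) :
    ‖x + y + z‖ ≤ ‖x‖ + ‖y‖ + ‖z‖ := by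
  simpa using norm_add₃_le (a := x) (b := y) (c := z)

private lemma sqrt_le_mul_of_sq_le {x s A : ℝ} (hx : 0 ≤ x) (hs : 0 ≤ s) (hA : 0 ≤ A)
    (h : x ^ 2 ≤ A * s ^ 2) : x ≤ Real.sqrt A * s := by
  have h2 := Real.sqrt_le_sqrt h
  rwa [Real.sqrt_sq hx, Real.sqrt_mul hA, Real.sqrt_sq hs] at h2

set_option maxHeartbeats 2000000 in
theorem stmt8 (d : ℕ) (hd : 2 ≤ d) (ρ : EuclideanSpace ℂ (Fin d) → ℝ)
    (hρ : ContDiff ℝ 2 ρ)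
    (hbd : IsBounded {z | ρ z < 0})
    (hne : {z | ρ z < 0}.Nonempty)
    (hgrad : ∀ w ∈ frontier {z | ρ z < 0}, fderiv ℝ ρ w ≠ 0)
    (hconv : ∃ c > (0 : ℝ), ∀ z ∈ closure {z | ρ z < 0}, ∀ w ∈ frontier {z | ρ z < 0},
      c * ‖w - z‖ ^ 2 ≤ ‖∑ j, cderiv ρ w j * (w j - z j)‖) :
    ∃ q : ℝ, 1 ≤ q ∧
      (∀ ζ ∈ frontier {z | ρ z < 0}, ∀ w ∈ frontier {z | ρ z < 0},
        (Real.sqrt (‖Lfun ρ ζ w‖) = 0 ↔ ζ = w)) ∧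
      (∀ ζ ∈ frontier {z | ρ z < 0}, ∀ w ∈ frontier {z | ρ z < 0},
        Real.sqrt (‖Lfun ρ ζ w‖) ≤ q * Real.sqrt (‖Lfun ρ w ζ‖)) ∧
      (∀ ζ ∈ frontier {z | ρ z < 0}, ∀ z₀ ∈ frontier {z | ρ z < 0},
        ∀ w ∈ frontier {z | ρ z < 0},
        Real.sqrt (‖Lfun ρ ζ w‖) ≤
          q * (Real.sqrt (‖Lfun ρ ζ z₀‖) + Real.sqrt (‖Lfun ρ z₀ w‖))) := by
  classical
  obtain ⟨c, hc, hcv⟩ := hconv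
  set Dset := {z | ρ z < 0} with hDdef
  set F := frontier Dset with hFdef
  rcases F.eq_empty_or_nonempty with hFe | hFne
  · refine ⟨1, le_refl 1, ?_, ?_, ?_⟩ <;> intro ζ hζ <;> rw [hFe] at hζ <;>
      exact absurd hζ (Set.notMem_empty ζ)
  -- the gradient vector field
  set g : EuclideanSpace ℂ (Fin d) → EuclideanSpace ℂ (Fin d) :=
    fun w => (WithLp.equiv 2 _).symm (fun j => cderiv ρ w j) with hgdef
  have hgj : ∀ w j, g w j = cderiv ρ w j := fun _ _ => rfl
  have hg : ContDiff ℝ 1 g := by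
    rw [hgdef]
    apply (contDiff_piLp _).mpr
    intro j
    have hf : ContDiff ℝ 1 (fderiv ℝ ρ) := hρ.fderiv_right (by norm_num)
    have hev : ∀ v : EuclideanSpace ℂ (Fin d), ContDiff ℝ 1 (fun w => fderiv ℝ ρ w v) :=
      fun v => (ContinuousLinearMap.apply ℝ ℝ v).contDiff.comp hf
    have h1 : ContDiff ℝ 1 (fun w => ((fderiv ℝ ρ w (EuclideanSpace.single j 1) : ℝ) : ℂ)) :=
      Complex.ofRealCLM.contDiff.comp (hev _)
    have h2 : ContDiff ℝ 1
        (fun w => ((fderiv ℝ ρ w (EuclideanSpace.single j Complex.I) : ℝ) : ℂ)) :=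
      Complex.ofRealCLM.contDiff.comp (hev _)
    have h3 : ContDiff ℝ 1 (fun w => cderiv ρ w j) := by
      have := (h1.sub (h2.const_smul Complex.I)).const_smul ((1 : ℂ) / 2)
      simpa [cderiv, smul_eq_mul] using this
    simpa [WithLp.equiv_symm_apply, PiLp.toLp_apply] using h3
  -- the numerator
  set S : EuclideanSpace ℂ (Fin d) → EuclideanSpace ℂ (Fin d) → ℂ :=
    fun ζ w => ∑ j, cderiv ρ w j * (w j - ζ j) with hSdef
  have f_low : ∀ z ∈ closure Dset, ∀ w ∈ F, c * ‖w - z‖ ^ 2 ≤ ‖S z w‖ := by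
    intro z hz w hw
    simpa only [hSdef] using hcv z hz w hw
  have hFsub : F ⊆ closure Dset := frontier_subset_closure
  have hSle : ∀ ζ w, ‖S ζ w‖ ≤ ‖g w‖ * ‖w - ζ‖ := by
    intro ζ w
    have h2 : S ζ w = ∑ j, g w j * ((w - ζ) j) := by
      simp only [hSdef]
      exact Finset.sum_congr rfl fun j _ => rfl
    rw [h2]
    exact cs_aux _ _
  have hN0 : ∀ w, Real.sqrt (∑ j, Complex.normSq (cderiv ρ w j)) = ‖g w‖ := by
    intro w
    rw [EuclideanSpace.norm_eq]
    congr 1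
    apply Finset.sum_congr rfl
    intro j _
    rw [hgj, Complex.sq_norm]
  have habsL : ∀ ζ w, ‖Lfun ρ ζ w‖ = ‖S ζ w‖ / ‖g w‖ := by
    intro ζ w
    simp only [Lfun, hSdef, norm_div, Complex.norm_real]
    rw [Real.norm_of_nonneg (Real.sqrt_nonneg _), hN0]
  -- positivity of the gradient norm on the frontier
  obtain ⟨x, hx⟩ := hne
  have hDo : IsOpen Dset := isOpen_lt hρ.continuous continuous_const
  have hgpos : ∀ w ∈ F, 0 < ‖g w‖ := by
    intro w hw
    have hwD : w ∉ Dset := by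
      rw [hFdef, hDo.frontier_eq] at hw
      exact hw.2
    have hxw : (0 : ℝ) < ‖w - x‖ := by
      have hne' : w - x ≠ 0 := sub_ne_zero.mpr (fun h => hwD (by rw [h]; exact hx))
      simpa [norm_pos_iff] using hne'
    have h1 := f_low x (subset_closure hx) w hw
    have h2 := hSle x w
    nlinarith [mul_pos hc (pow_pos hxw 2), h1, h2, hxw]
  -- compactness
  have hFb : IsBounded F := hbd.closure.subset frontier_subset_closure
  have hFc : IsCompact F := Metric.isCompact_of_isClosed_isBounded isClosed_frontier hFb
  have hNc : Continuous fun w => ‖g w‖ := hg.continuous.norm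
  obtain ⟨wm, hwm, hwmin⟩ := hFc.exists_isMinOn hFne hNc.continuousOn
  obtain ⟨wM, hwM, hwmax⟩ := hFc.exists_isMaxOn hFne hNc.continuousOn
  set m := ‖g wm‖ with hmdef
  set M := ‖g wM‖ with hMdef
  have hm : ∀ w ∈ F, m ≤ ‖g w‖ := fun w hw => hwmin hw
  have hM : ∀ w ∈ F, ‖g w‖ ≤ M := fun w hw => hwmax hw
  have hm0 : 0 < m := hgpos wm hwm
  have hM0 : 0 < M := lt_of_lt_of_le hm0 (hM wm hwm)
  -- Lipschitz bound for g on F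
  obtain ⟨R, hR⟩ := hFb.subset_closedBall 0
  obtain ⟨K, hK⟩ := (isCompact_closedBall (0 : EuclideanSpace ℂ (Fin d)) R).exists_bound_of_continuousOn
    (hg.continuous_fderiv one_ne_zero).continuousOn
  set K' := max K 0 with hK'def
  have hK'0 : 0 ≤ K' := le_max_right _ _
  have hlip : ∀ z ∈ F, ∀ w ∈ F, ‖g w - g z‖ ≤ K' * ‖w - z‖ := by
    intro z hz w hw
    exact Convex.norm_image_sub_le_of_norm_fderiv_le
      (fun y _ => (hg.differentiable one_ne_zero).differentiableAt)
      (fun y hy => le_trans (hK y hy) (le_max_left _ _))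
      (convex_closedBall _ _) (hR hz) (hR hw)
  -- algebraic identities
  have hsym : ∀ ζ w, S ζ w + S w ζ = ∑ j, (cderiv ρ w j - cderiv ρ ζ j) * (w j - ζ j) := by
    intro ζ w
    simp only [hSdef, ← Finset.sum_add_distrib]
    exact Finset.sum_congr rfl fun j _ => by ring
  have htri : ∀ ζ z w, S ζ w = S z w + S ζ z +
      ∑ j, (cderiv ρ w j - cderiv ρ z j) * (z j - ζ j) := by
    intro ζ z w
    simp only [hSdef, ← Finset.sum_add_distrib]
    exact Finset.sum_congr rfl fun j _ => by ring
  have hT : ∀ x' y' a b : EuclideanSpace ℂ (Fin d),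
      ‖∑ j, (cderiv ρ x' j - cderiv ρ y' j) * (a j - b j)‖ ≤
        ‖g x' - g y'‖ * ‖a - b‖ := by
    intro x' y' a b
    have h2 : (∑ j, (cderiv ρ x' j - cderiv ρ y' j) * (a j - b j)) =
        ∑ j, (g x' - g y') j * ((a - b) j) :=
      Finset.sum_congr rfl fun j _ => rfl
    rw [h2]
    exact cs_aux _ _
  -- |Lfun| * ‖g w‖ = |S|
  have hLS : ∀ ζ, ∀ w ∈ F, ‖Lfun ρ ζ w‖ * ‖g w‖ = ‖S ζ w‖ := by
    intro ζ w hw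
    rw [habsL, div_mul_cancel₀ _ (hgpos w hw).ne']
  clear_value g S m M K'
  -- constants
  set B₁ := (c + K') * M / (c * m) with hB₁def
  set B₂ := (m + 2 * M + K' * M / c) / m with hB₂def
  have hB₁0 : 0 ≤ B₁ := by
    exact div_nonneg (mul_nonneg (by linarith) hM0.le) (mul_pos hc hm0).le
  have hB₂0 : 0 ≤ B₂ := by
    have : 0 ≤ K' * M / c := div_nonneg (mul_nonneg hK'0 hM0.le) hc.le
    apply div_nonneg (by linarith) hm0.le
  set q := max 1 (max (Real.sqrt B₁) (Real.sqrt B₂)) with hqdef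
  have hq1 : (1 : ℝ) ≤ q := le_max_left _ _
  have hqB₁ : Real.sqrt B₁ ≤ q := le_trans (le_max_left _ _) (le_max_right _ _)
  have hqB₂ : Real.sqrt B₂ ≤ q := le_trans (le_max_right _ _) (le_max_right _ _)
  clear_value B₁ B₂ q
  refine ⟨q, hq1, ?_, ?_, ?_⟩
  · -- (a) d(ζ,w) = 0 ↔ ζ = w
    intro ζ hζ w hw
    constructor
    · intro h
      have h0 : ‖Lfun ρ ζ w‖ = 0 :=
        le_antisymm (Real.sqrt_eq_zero'.mp h) (norm_nonneg _)
      have h2 : ‖S ζ w‖ = 0 := by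
        have := hLS ζ w hw
        rw [h0, zero_mul] at this
        exact this.symm
      have h3 := f_low ζ (hFsub hζ) w hw
      rw [h2] at h3
      have h4 : ‖w - ζ‖ ^ 2 ≤ 0 := by nlinarith
      have h4' : ‖w - ζ‖ ^ 2 = 0 := le_antisymm h4 (sq_nonneg _)
      have h4'' : ‖w - ζ‖ = 0 := by
        have := pow_eq_zero_iff (M₀ := ℝ) (n := 2) two_ne_zero |>.mp h4'
        exact this
      have h5 : w = ζ := by rwa [norm_eq_zero, sub_eq_zero] at h4''
      exact h5.symm
    · rintro rfl
      have h1 : S ζ ζ = 0 := by simp [hSdef]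
      have h2 : ‖Lfun ρ ζ ζ‖ = 0 := by rw [habsL, h1, norm_zero, zero_div]
      rw [h2, Real.sqrt_zero]
  · -- (b) quasi-symmetry
    intro ζ hζ w hw
    have hXa := hLS ζ w hw
    have hYb := hLS w ζ hζ
    have hX0 : 0 ≤ ‖Lfun ρ ζ w‖ := norm_nonneg _
    have hY0 : 0 ≤ ‖Lfun ρ w ζ‖ := norm_nonneg _
    -- |S ζ w| ≤ |S w ζ| + ‖g w - g ζ‖‖w - ζ‖
    have e1 : ‖S ζ w‖ ≤ ‖S w ζ‖ + ‖g w - g ζ‖ * ‖w - ζ‖ := by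
      have hid : S ζ w = (∑ j, (cderiv ρ w j - cderiv ρ ζ j) * (w j - ζ j)) - S w ζ :=
        eq_sub_of_add_eq (hsym ζ w)
      calc ‖S ζ w‖
          ≤ ‖∑ j, (cderiv ρ w j - cderiv ρ ζ j) * (w j - ζ j)‖ +
            ‖S w ζ‖ := by
            rw [hid]; simpa using norm_sub_le _ _
        _ ≤ ‖g w - g ζ‖ * ‖w - ζ‖ + ‖S w ζ‖ := by
            have := hT w ζ w ζ
            linarith
        _ = ‖S w ζ‖ + ‖g w - g ζ‖ * ‖w - ζ‖ := by ring
    have e2 : ‖g w - g ζ‖ ≤ K' * ‖w - ζ‖ := hlip ζ hζ w hw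
    have e3 : c * ‖w - ζ‖ ^ 2 ≤ ‖S w ζ‖ := by
      have := f_low w (hFsub hw) ζ hζ
      rwa [norm_sub_rev] at this
    have key : c * ‖S ζ w‖ ≤ (c + K') * ‖S w ζ‖ := by
      nlinarith [mul_le_mul_of_nonneg_right e2 (norm_nonneg (w - ζ)), hc.le, hK'0,
        norm_nonneg (w - ζ), sq_nonneg ‖w - ζ‖]
    have hclaim : ‖Lfun ρ ζ w‖ ≤ B₁ * ‖Lfun ρ w ζ‖ := by
      rw [hB₁def, div_mul_eq_mul_div, le_div_iff₀ (mul_pos hc hm0)]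
      calc ‖Lfun ρ ζ w‖ * (c * m)
          = (c * ‖Lfun ρ ζ w‖) * m := by ring
        _ ≤ (c * ‖Lfun ρ ζ w‖) * ‖g w‖ :=
            mul_le_mul_of_nonneg_left (hm w hw) (mul_nonneg hc.le hX0)
        _ = c * (‖Lfun ρ ζ w‖ * ‖g w‖) := by ring
        _ = c * ‖S ζ w‖ := by rw [hXa]
        _ ≤ (c + K') * ‖S w ζ‖ := key
        _ = ((c + K') * ‖Lfun ρ w ζ‖) * ‖g ζ‖ := by rw [← hYb]; ring
        _ ≤ ((c + K') * ‖Lfun ρ w ζ‖) * M :=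
            mul_le_mul_of_nonneg_left (hM ζ hζ) (mul_nonneg (by linarith) hY0)
        _ = (c + K') * M * ‖Lfun ρ w ζ‖ := by ring
    have hsq : Real.sqrt (‖Lfun ρ ζ w‖) ≤
        Real.sqrt B₁ * Real.sqrt (‖Lfun ρ w ζ‖) := by
      apply sqrt_le_mul_of_sq_le (Real.sqrt_nonneg _) (Real.sqrt_nonneg _) hB₁0
      rw [Real.sq_sqrt hX0, Real.sq_sqrt hY0]
      exact hclaim
    calc Real.sqrt (‖Lfun ρ ζ w‖)
        ≤ Real.sqrt B₁ * Real.sqrt (‖Lfun ρ w ζ‖) := hsq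
      _ ≤ q * Real.sqrt (‖Lfun ρ w ζ‖) :=
          mul_le_mul_of_nonneg_right hqB₁ (Real.sqrt_nonneg _)
  · -- (c) quasi-triangle inequality
    intro ζ hζ z hz w hw
    set t := Real.sqrt (‖Lfun ρ ζ w‖) with htdef
    set u := Real.sqrt (‖Lfun ρ ζ z‖) with hudef
    set v := Real.sqrt (‖Lfun ρ z w‖) with hvdef
    have ht0 : 0 ≤ t := Real.sqrt_nonneg _
    have hu0 : 0 ≤ u := Real.sqrt_nonneg _
    have hv0 : 0 ≤ v := Real.sqrt_nonneg _
    have ht2 : t ^ 2 = ‖Lfun ρ ζ w‖ := Real.sq_sqrt (norm_nonneg _)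
    have hu2 : u ^ 2 = ‖Lfun ρ ζ z‖ := Real.sq_sqrt (norm_nonneg _)
    have hv2 : v ^ 2 = ‖Lfun ρ z w‖ := Real.sq_sqrt (norm_nonneg _)
    clear_value t u v
    have F1 : t ^ 2 * ‖g w‖ = ‖S ζ w‖ := by rw [ht2]; exact hLS ζ w hw
    have F2 : v ^ 2 * ‖g w‖ = ‖S z w‖ := by rw [hv2]; exact hLS z w hw
    have F3 : u ^ 2 * ‖g z‖ = ‖S ζ z‖ := by rw [hu2]; exact hLS ζ z hz
    have F4 : ‖S ζ w‖ ≤ ‖S z w‖ + ‖S ζ z‖ +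
        K' * (‖w - z‖ * ‖z - ζ‖) := by
      have hid := htri ζ z w
      have habc : ‖S ζ w‖ ≤ ‖S z w‖ + ‖S ζ z‖ +
          ‖∑ j, (cderiv ρ w j - cderiv ρ z j) * (z j - ζ j)‖ := by
        rw [hid]
        exact abs_add₃_aux _ _ _
      have hTb : ‖∑ j, (cderiv ρ w j - cderiv ρ z j) * (z j - ζ j)‖ ≤
          K' * (‖w - z‖ * ‖z - ζ‖) := by
        calc ‖∑ j, (cderiv ρ w j - cderiv ρ z j) * (z j - ζ j)‖
            ≤ ‖g w - g z‖ * ‖z - ζ‖ := hT w z z ζ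
          _ ≤ (K' * ‖w - z‖) * ‖z - ζ‖ :=
              mul_le_mul_of_nonneg_right (hlip z hz w hw) (norm_nonneg _)
          _ = K' * (‖w - z‖ * ‖z - ζ‖) := by ring
      linarith
    -- ‖w - z‖ ≤ √(M/c) v  and  ‖z - ζ‖ ≤ √(M/c) u
    have hMc0 : 0 ≤ M / c := div_nonneg hM0.le hc.le
    have F5 : ‖w - z‖ ≤ Real.sqrt (M / c) * v := by
      apply sqrt_le_mul_of_sq_le (norm_nonneg _) hv0 hMc0
      have h1 := f_low z (hFsub hz) w hw
      have h2 : ‖S z w‖ ≤ v ^ 2 * M := by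
        rw [← F2]
        exact mul_le_mul_of_nonneg_left (hM w hw) (sq_nonneg v)
      rw [div_mul_eq_mul_div, le_div_iff₀ hc]
      linarith
    have F6 : ‖z - ζ‖ ≤ Real.sqrt (M / c) * u := by
      apply sqrt_le_mul_of_sq_le (norm_nonneg _) hu0 hMc0
      have h1 := f_low ζ (hFsub hζ) z hz
      have h2 : ‖S ζ z‖ ≤ u ^ 2 * M := by
        rw [← F3]
        exact mul_le_mul_of_nonneg_left (hM z hz) (sq_nonneg u)
      rw [div_mul_eq_mul_div, le_div_iff₀ hc]
      linarith
    -- main quadratic estimate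
    have hss : Real.sqrt (M / c) * Real.sqrt (M / c) = M / c := Real.mul_self_sqrt hMc0
    have g3 : K' * (‖w - z‖ * ‖z - ζ‖) ≤ K' * (M / c) * (v * u) := by
      have h1 : ‖w - z‖ * ‖z - ζ‖ ≤ (Real.sqrt (M / c) * v) * (Real.sqrt (M / c) * u) :=
        mul_le_mul F5 F6 (norm_nonneg _) (mul_nonneg (Real.sqrt_nonneg _) hv0)
      have h2 : (Real.sqrt (M / c) * v) * (Real.sqrt (M / c) * u) = (M / c) * (v * u) := by
        rw [show (Real.sqrt (M / c) * v) * (Real.sqrt (M / c) * u) =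
          (Real.sqrt (M / c) * Real.sqrt (M / c)) * (v * u) from by ring, hss]
      calc K' * (‖w - z‖ * ‖z - ζ‖) ≤ K' * ((M / c) * (v * u)) :=
            mul_le_mul_of_nonneg_left (le_of_le_of_eq h1 h2) hK'0
        _ = K' * (M / c) * (v * u) := by ring
    have gNw : ‖g w‖ ≤ M := hM w hw
    have gNwm : m ≤ ‖g w‖ := hm w hw
    have gNz : ‖g z‖ ≤ M := hM z hz
    have hmain : m * t ^ 2 ≤ M * v ^ 2 + M * u ^ 2 + (K' * (M / c)) * (v * u) := by
      have p1 : t ^ 2 * m ≤ t ^ 2 * ‖g w‖ := mul_le_mul_of_nonneg_left gNwm (sq_nonneg t)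
      have p2 : v ^ 2 * ‖g w‖ ≤ v ^ 2 * M := mul_le_mul_of_nonneg_left gNw (sq_nonneg v)
      have p3 : u ^ 2 * ‖g z‖ ≤ u ^ 2 * M := mul_le_mul_of_nonneg_left gNz (sq_nonneg u)
      linarith [p1, p2, p3, F1, F2, F3, F4, g3]
    have hmB₂ : m * B₂ = m + 2 * M + K' * M / c := by
      rw [hB₂def, mul_div_cancel₀ _ hm0.ne']
    have hq2 : t ^ 2 ≤ B₂ * (u + v) ^ 2 := by
      have hsqu : u ^ 2 ≤ (u + v) ^ 2 := by nlinarith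
      have hsqv : v ^ 2 ≤ (u + v) ^ 2 := by nlinarith
      have hsquv : v * u ≤ (u + v) ^ 2 := by nlinarith
      have h1 : m * t ^ 2 ≤ m * (B₂ * (u + v) ^ 2) := by
        have e1 : M * v ^ 2 ≤ M * (u + v) ^ 2 := mul_le_mul_of_nonneg_left hsqv hM0.le
        have e2 : M * u ^ 2 ≤ M * (u + v) ^ 2 := mul_le_mul_of_nonneg_left hsqu hM0.le
        have e3 : (K' * (M / c)) * (v * u) ≤ (K' * (M / c)) * (u + v) ^ 2 :=
          mul_le_mul_of_nonneg_left hsquv (mul_nonneg hK'0 hMc0)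
        have e4 : 0 ≤ m * (u + v) ^ 2 := mul_nonneg hm0.le (sq_nonneg _)
        have e5 : m * (B₂ * (u + v) ^ 2) = (m + 2 * M + K' * M / c) * (u + v) ^ 2 := by
          rw [← mul_assoc, hmB₂]
        rw [e5]
        have heq : K' * (M / c) = K' * M / c := by ring
        calc m * t ^ 2
            ≤ M * (u + v) ^ 2 + M * (u + v) ^ 2 + (K' * (M / c)) * (u + v) ^ 2 +
              m * (u + v) ^ 2 := by linarith
          _ = (m + 2 * M + K' * M / c) * (u + v) ^ 2 := by rw [← heq]; ring
      exact le_of_mul_le_mul_left (by linarith) hm0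
    have hfin : t ≤ Real.sqrt B₂ * (u + v) :=
      sqrt_le_mul_of_sq_le ht0 (by linarith) hB₂0 hq2
    calc t ≤ Real.sqrt B₂ * (u + v) := hfin
      _ ≤ q * (u + v) := mul_le_mul_of_nonneg_right hqB₂ (by linarith)
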